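/- arXiv:0907.3054 — 3 statements merged into one kernel-verified Lean document; each statement's English description precedes it below -/
import Mathlib

section
/- For 1 < α < 2, the principal value integral over {|s| > 1+ε} ∪ {1/|s| > 1+ε} of (|s|^(α-1) - 1)/|1-s|^(1+α) ds equals zero for every ε > 0; more precisely, ∫_{|s|>1+ε} (|s|^(α-1) - 1)/|1-s|^(1+α) ds + ∫_{0<|s|<1/(1+ε)} (|s|^(α-1) - 1)/|1-s|^(1+α) ds = 0. -/
open MeasureTheory

lemma stmt2_alg (α a b : ℝ) (ha : 0 < a) (hb : 0 < b) :
    (a ^ 2)⁻¹ * ((a⁻¹ ^ (α - 1) - 1) / (b / a) ^ (1 + α))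
      = -((a ^ (α - 1) - 1) / b ^ (1 + α)) := by
  have ha' : a ≠ 0 := ha.ne'
  rw [Real.div_rpow hb.le ha.le, Real.inv_rpow ha.le]
  have h3 : a ^ (1 + α) = a ^ 2 * a ^ (α - 1) := by
    rw [← Real.rpow_natCast a 2, ← Real.rpow_add ha]
    congr 1
    ring
  have hbne : b ^ (1 + α) ≠ 0 := (Real.rpow_pos_of_pos hb _).ne'
  have hane : a ^ (α - 1) ≠ 0 := (Real.rpow_pos_of_pos ha _).ne'
  have hane2 : a ^ (1 + α) ≠ 0 := (Real.rpow_pos_of_pos ha _).ne'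
  field_simp
  linear_combination (1 - a ^ (α - 1)) * h3

/-- The principal value integral of `(|s|^(α-1) - 1)/|1-s|^(1+α)` over
`{|s| > 1+ε} ∪ {0 < |s| < 1/(1+ε)}` vanishes. -/
theorem stmt2 (α ε : ℝ) (hα1 : 1 < α) (hα2 : α < 2) (hε : 0 < ε) :
    (∫ s in {s : ℝ | 1 + ε < |s|}, (|s| ^ (α - 1) - 1) / |1 - s| ^ (1 + α))
      + (∫ s in {s : ℝ | 0 < |s| ∧ |s| < 1 / (1 + ε)},
          (|s| ^ (α - 1) - 1) / |1 - s| ^ (1 + α)) = 0 := by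
  set g : ℝ → ℝ := fun s => (|s| ^ (α - 1) - 1) / |1 - s| ^ (1 + α) with hg
  set B : Set ℝ := {s : ℝ | 0 < |s| ∧ |s| < 1 / (1 + ε)} with hBdef
  have hε1 : (0:ℝ) < 1 + ε := by linarith
  have hB : MeasurableSet B := by
    apply MeasurableSet.inter
    · exact measurableSet_lt measurable_const (measurable_id.abs)
    · exact measurableSet_lt (measurable_id.abs) measurable_const
  have himg : (fun x : ℝ => x⁻¹) '' B = {s : ℝ | 1 + ε < |s|} := by
    ext y
    simp only [Set.mem_image, Set.mem_setOf_eq, hBdef]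
    constructor
    · rintro ⟨x, ⟨hx0, hx1⟩, rfl⟩
      rw [abs_inv, lt_inv_comm₀ hε1 hx0, ← one_div]
      exact hx1
    · intro hy
      have hy0 : 0 < |y| := lt_trans hε1 hy
      refine ⟨y⁻¹, ⟨?_, ?_⟩, ?_⟩
      · rw [abs_inv]; positivity
      · rw [abs_inv, inv_lt_iff_one_lt_mul₀ hy0, div_mul_eq_mul_div, lt_div_iff₀ hε1]
        nlinarith
      · rw [inv_inv]
  have hderiv : ∀ x ∈ B, HasDerivWithinAt (fun x : ℝ => x⁻¹) (-(x ^ 2)⁻¹) B x := by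
    intro x hx
    exact (hasDerivAt_inv (abs_pos.mp hx.1)).hasDerivWithinAt
  have hinj : Set.InjOn (fun x : ℝ => x⁻¹) B := fun x _ y _ h => inv_injective h
  have key : (∫ s in {s : ℝ | 1 + ε < |s|}, g s)
      = ∫ s in B, |(-(s ^ 2)⁻¹)| • g s⁻¹ := by
    rw [← himg]
    exact integral_image_eq_integral_abs_deriv_smul hB hderiv hinj g
  have hcong : ∀ x ∈ B, |(-(x ^ 2)⁻¹)| • g x⁻¹ = -g x := by
    intro x hx
    obtain ⟨hx0, hx1⟩ := hx
    have hxne : x ≠ 0 := abs_pos.mp hx0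
    have hxlt1 : |x| < 1 := by
      calc |x| < 1 / (1 + ε) := hx1
      _ < 1 := by rw [div_lt_one hε1]; linarith
    have hb : 0 < |1 - x| := by
      have : x < 1 := lt_of_abs_lt hxlt1
      rw [abs_pos]; intro h; linarith [sub_eq_zero.mp h]
    have h1 : |(-(x ^ 2)⁻¹)| = (|x| ^ 2)⁻¹ := by
      rw [abs_neg, abs_inv, abs_pow, sq_abs]
    have h2 : |1 - x⁻¹| = |1 - x| / |x| := by
      rw [abs_sub_comm (1:ℝ) x, ← abs_div]
      congr 1
      field_simp
    simp only [hg, smul_eq_mul, h1, h2, abs_inv]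
    exact stmt2_alg α |x| |1 - x| hx0 hb
  rw [key, setIntegral_congr_fun hB hcong, integral_neg]
  ring
end

section
/- Let Ω ⊂ ℝⁿ be an open convex set with nonempty boundary, 1 < α < 2, and x ∈ Ω. Then ∫_{S^{n-1}} (1/d_{w,Ω}(x) + 1/δ_{w,Ω}(x))^α dw ≥ (∫_{S^{n-1}} |w_n|^α dw) · (1/d_Ω(x) + 1/(D_Ω(x) − d_Ω(x)))^α, where d_Ω(x) = dist(x, ∂Ω), D_Ω(x) is the infimum over supporting hyperplanes P at nearest boundary points of x of the width of the smallest slab containing Ω bounded by P, d_{w,Ω}(x) = min{|t| : x+tw ∉ Ω}, δ_{w,Ω}(x) = sup{|t| : x+tw ∈ Ω}, and the term 1/(D_Ω(x) − d_Ω(x)) is interpreted as 0 when D_Ω(x) = ∞. -/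
open MeasureTheory Metric
open scoped ENNReal RealInnerProductSpace Pointwise

/-- The distance `d_{w,Ω}(x) = min{|t| : x + t w ∉ Ω}`, valued in `[0,∞]`. -/
noncomputable def dirDist {n : ℕ} (Ω : Set (EuclideanSpace ℝ (Fin n)))
    (x w : EuclideanSpace ℝ (Fin n)) : ℝ≥0∞ :=
  sInf {r : ℝ≥0∞ | ∃ t : ℝ, x + t • w ∉ Ω ∧ r = ENNReal.ofReal |t|}

/-- The quantity `δ_{w,Ω}(x) = sup{|t| : x + t w ∈ Ω}`, valued in `[0,∞]`. -/
noncomputable def dirDelta {n : ℕ} (Ω : Set (EuclideanSpace ℝ (Fin n)))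
    (x w : EuclideanSpace ℝ (Fin n)) : ℝ≥0∞ :=
  sSup {r : ℝ≥0∞ | ∃ t : ℝ, x + t • w ∈ Ω ∧ r = ENNReal.ofReal |t|}

/-- The width `D_Ω(x)`: the infimum, over nearest boundary points `z` of `x` and inward unit
normals `e` of supporting hyperplanes of `Ω` at `z`, of the width of the smallest slab
containing `Ω` bounded by the hyperplane; valued in `[0,∞]`. -/
noncomputable def slabWidth {n : ℕ} (Ω : Set (EuclideanSpace ℝ (Fin n)))
    (x : EuclideanSpace ℝ (Fin n)) : ℝ≥0∞ :=
  ⨅ z ∈ {z : EuclideanSpace ℝ (Fin n) |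
      z ∈ frontier Ω ∧ dist x z = Metric.infDist x (frontier Ω)},
    ⨅ e ∈ {e : EuclideanSpace ℝ (Fin n) | ‖e‖ = 1 ∧ ∀ y ∈ Ω, (0 : ℝ) ≤ ⟪e, y - z⟫},
      ⨆ y ∈ Ω, ENNReal.ofReal ⟪e, y - z⟫

section Aux

variable {n : ℕ}

/-- Crossing the frontier along a segment. -/
lemma cross_frontier {Ω : Set (EuclideanSpace ℝ (Fin n))} (hΩo : IsOpen Ω)
    {x y : EuclideanSpace ℝ (Fin n)} (hx : x ∈ Ω) (hy : y ∉ Ω) :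
    ∃ p ∈ frontier Ω, dist x p ≤ dist x y := by
  by_cases hyc : y ∈ closure Ω
  · exact ⟨y, ⟨hyc, by rwa [hΩo.interior_eq]⟩, le_refl _⟩
  · by_contra h
    push_neg at h
    have hsub : segment ℝ x y ⊆ Ω ∪ (closure Ω)ᶜ := by
      intro p hp
      by_cases hpc : p ∈ closure Ω
      · by_cases hpΩ : p ∈ Ω
        · exact Or.inl hpΩ
        · have hpf : p ∈ frontier Ω := ⟨hpc, by rwa [hΩo.interior_eq]⟩
          have h1 : dist x p + dist p y = dist x y := dist_add_dist_of_mem_segment hp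
          have h2 := h p hpf
          have := dist_nonneg (x := p) (y := y)
          linarith
      · exact Or.inr hpc
    have hdisj : Disjoint Ω (closure Ω)ᶜ :=
      disjoint_compl_right.mono_left subset_closure
    rcases (convex_segment x y).isPreconnected.subset_or_subset hΩo
        isClosed_closure.isOpen_compl hdisj hsub with hc | hc
    · exact hy (hc (right_mem_segment ℝ x y))
    · exact hyc (absurd (hc (left_mem_segment ℝ x y)) (by simp [subset_closure hx]))

/-- `volume.toSphere` is invariant under linear isometries. -/
lemma toSphere_map_eq (O : EuclideanSpace ℝ (Fin n) ≃ₗᵢ[ℝ] EuclideanSpace ℝ (Fin n))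
    (Φ : sphere (0 : EuclideanSpace ℝ (Fin n)) 1 → sphere (0 : EuclideanSpace ℝ (Fin n)) 1)
    (hΦ : ∀ w, (Φ w : EuclideanSpace ℝ (Fin n)) = O w) :
    Measure.map Φ (volume : Measure (EuclideanSpace ℝ (Fin n))).toSphere
      = (volume : Measure (EuclideanSpace ℝ (Fin n))).toSphere := by
  have hmem : ∀ w : sphere (0 : EuclideanSpace ℝ (Fin n)) 1,
      O w ∈ sphere (0 : EuclideanSpace ℝ (Fin n)) 1 := by
    intro w
    have hw := mem_sphere_zero_iff_norm.mp w.2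
    simp [mem_sphere_zero_iff_norm, O.norm_map, hw]
  have hmem2 : ∀ p : sphere (0 : EuclideanSpace ℝ (Fin n)) 1,
      O.symm p ∈ sphere (0 : EuclideanSpace ℝ (Fin n)) 1 := by
    intro p
    have hp := mem_sphere_zero_iff_norm.mp p.2
    simp [mem_sphere_zero_iff_norm, O.symm.norm_map, hp]
  have hΦ' : ∀ w, Φ w = (⟨O w, hmem w⟩ : sphere (0 : EuclideanSpace ℝ (Fin n)) 1) :=
    fun w => Subtype.ext (hΦ w)
  have hΦc : Continuous Φ := by
    have hfe : Φ = fun w : sphere (0 : EuclideanSpace ℝ (Fin n)) 1 =>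
        (⟨O w, hmem w⟩ : sphere (0 : EuclideanSpace ℝ (Fin n)) 1) :=
      funext hΦ'
    rw [hfe]
    exact Continuous.subtype_mk (O.continuous.comp continuous_subtype_val) _
  have hvol : ∀ B : Set (EuclideanSpace ℝ (Fin n)), volume (O.symm '' B) = volume B := by
    intro B
    have himg : O.symm '' B = ⇑O ⁻¹' B := by
      ext u
      constructor
      · rintro ⟨b, hb, rfl⟩; simpa using hb
      · intro hu; exact ⟨O u, hu, by simp⟩
    rw [himg]
    calc volume (⇑O ⁻¹' B) = Measure.map O.toHomeomorph.toMeasurableEquiv volume B :=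
          (O.toHomeomorph.toMeasurableEquiv.map_apply B).symm
      _ = volume B := by
          rw [show (⇑O.toHomeomorph.toMeasurableEquiv : EuclideanSpace ℝ (Fin n) → EuclideanSpace ℝ (Fin n))
              = ⇑O from rfl, O.measurePreserving.map_eq]
  refine Measure.ext fun s hs => ?_
  rw [Measure.map_apply hΦc.measurable hs, Measure.toSphere_apply' _ (hΦc.measurable hs),
    Measure.toSphere_apply' _ hs]
  congr 1
  have h1 : (Subtype.val '' (Φ ⁻¹' s) : Set (EuclideanSpace ℝ (Fin n)))
      = O.symm '' (Subtype.val '' s) := by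
    ext u
    constructor
    · rintro ⟨w, hw, rfl⟩
      exact ⟨O w, ⟨Φ w, hw, hΦ w⟩, by simp⟩
    · rintro ⟨v, ⟨p, hp, rfl⟩, rfl⟩
      refine ⟨⟨O.symm p, hmem2 p⟩, ?_, rfl⟩
      show Φ _ ∈ s
      have hq : Φ ⟨O.symm (p : EuclideanSpace ℝ (Fin n)), hmem2 p⟩ = p := by
        rw [hΦ']
        exact Subtype.ext (by simp)
      rw [hq]
      exact hp
  rw [h1]
  have h2 : (Set.Ioo (0:ℝ) 1) • (O.symm '' (Subtype.val '' s))
      = O.symm '' ((Set.Ioo (0:ℝ) 1) • (Subtype.val '' s)) := by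
    ext u
    constructor
    · rintro ⟨c, hc, v, ⟨p, hp, rfl⟩, rfl⟩
      exact ⟨c • p, ⟨c, hc, p, hp, rfl⟩, by simp [O.symm.map_smul]⟩
    · rintro ⟨v, ⟨c, hc, p, hp, rfl⟩, rfl⟩
      exact ⟨c, hc, O.symm p, ⟨p, hp, rfl⟩, by simp [O.symm.map_smul]⟩
  rw [h2, hvol]

/-- Rotation invariance of inner-product integrals on the sphere. -/
lemma lintegral_sphere_inner_eq (g : ℝ → ℝ≥0∞) (hg : Measurable g)
    {e e' : EuclideanSpace ℝ (Fin n)} (he : ‖e‖ = 1) (he' : ‖e'‖ = 1) :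
    ∫⁻ w : sphere (0 : EuclideanSpace ℝ (Fin n)) 1, g ⟪e, (w : EuclideanSpace ℝ (Fin n))⟫
        ∂((volume : Measure (EuclideanSpace ℝ (Fin n))).toSphere)
      = ∫⁻ w : sphere (0 : EuclideanSpace ℝ (Fin n)) 1, g ⟪e', (w : EuclideanSpace ℝ (Fin n))⟫
        ∂((volume : Measure (EuclideanSpace ℝ (Fin n))).toSphere) := by
  set O : EuclideanSpace ℝ (Fin n) ≃ₗᵢ[ℝ] EuclideanSpace ℝ (Fin n) :=
    Submodule.reflection (ℝ ∙ (e' - e))ᗮ with hO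
  have hOe : O e' = e := Submodule.reflection_sub (by rw [he, he'])
  have hmem : ∀ w : sphere (0 : EuclideanSpace ℝ (Fin n)) 1,
      O w ∈ sphere (0 : EuclideanSpace ℝ (Fin n)) 1 := by
    intro w
    have hw := mem_sphere_zero_iff_norm.mp w.2
    simp [mem_sphere_zero_iff_norm, O.norm_map, hw]
  set Φ : sphere (0 : EuclideanSpace ℝ (Fin n)) 1 → sphere (0 : EuclideanSpace ℝ (Fin n)) 1 :=
    fun w => ⟨O w, hmem w⟩ with hΦdef
  have hΦc : Continuous Φ := Continuous.subtype_mk (O.continuous.comp continuous_subtype_val) _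
  have hmeas : Measurable fun u : sphere (0 : EuclideanSpace ℝ (Fin n)) 1 =>
      g ⟪e, (u : EuclideanSpace ℝ (Fin n))⟫ :=
    hg.comp (Continuous.inner continuous_const continuous_subtype_val).measurable
  have hkey : ∀ w : sphere (0 : EuclideanSpace ℝ (Fin n)) 1,
      g ⟪e', (w : EuclideanSpace ℝ (Fin n))⟫ = g ⟪e, (Φ w : EuclideanSpace ℝ (Fin n))⟫ := by
    intro w
    have : ⟪e, (Φ w : EuclideanSpace ℝ (Fin n))⟫ = ⟪e', (w : EuclideanSpace ℝ (Fin n))⟫ := by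
      rw [hΦdef, ← hOe]
      exact O.inner_map_map e' (w : EuclideanSpace ℝ (Fin n))
    rw [this]
  calc ∫⁻ w : sphere (0 : EuclideanSpace ℝ (Fin n)) 1, g ⟪e, (w : EuclideanSpace ℝ (Fin n))⟫
        ∂((volume : Measure (EuclideanSpace ℝ (Fin n))).toSphere)
      = ∫⁻ w, g ⟪e, (w : EuclideanSpace ℝ (Fin n))⟫
          ∂(Measure.map Φ ((volume : Measure (EuclideanSpace ℝ (Fin n))).toSphere)) := by
        rw [toSphere_map_eq O Φ (fun w => rfl)]
    _ = ∫⁻ w, g ⟪e, (Φ w : EuclideanSpace ℝ (Fin n))⟫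
          ∂((volume : Measure (EuclideanSpace ℝ (Fin n))).toSphere) :=
        lintegral_map hmeas hΦc.measurable
    _ = ∫⁻ w : sphere (0 : EuclideanSpace ℝ (Fin n)) 1, g ⟪e', (w : EuclideanSpace ℝ (Fin n))⟫
          ∂((volume : Measure (EuclideanSpace ℝ (Fin n))).toSphere) := by
        simp_rw [hkey]

/-- The inner product of `x - z` with the inward normal equals the distance to the boundary. -/
lemma inner_eq_infDist {Ω : Set (EuclideanSpace ℝ (Fin n))}
    {x z e : EuclideanSpace ℝ (Fin n)} (hx : x ∈ Ω)
    (he1 : ‖e‖ = 1) (he2 : ∀ y ∈ Ω, (0 : ℝ) ≤ ⟪e, y - z⟫)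
    (hd0 : 0 < Metric.infDist x (frontier Ω))
    (hdist : dist x z = Metric.infDist x (frontier Ω))
    (hball : ball x (Metric.infDist x (frontier Ω)) ⊆ Ω) :
    ⟪e, x - z⟫ = Metric.infDist x (frontier Ω) := by
  set d := Metric.infDist x (frontier Ω) with hd
  have hle : ⟪e, x - z⟫ ≤ d := by
    calc ⟪e, x - z⟫ ≤ ‖e‖ * ‖x - z‖ := real_inner_le_norm _ _
      _ = dist x z := by rw [he1, one_mul, dist_eq_norm]
      _ = d := hdist
  have hge : ∀ ε : ℝ, 0 < ε → d - ε ≤ ⟪e, x - z⟫ := by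
    intro ε hε
    rcases le_or_gt d ε with hcase | hcase
    · have := he2 x hx
      linarith
    · have hmem : x - (d - ε) • e ∈ Ω := by
        apply hball
        rw [mem_ball, dist_eq_norm]
        have : x - (d - ε) • e - x = -((d - ε) • e) := by abel
        rw [this, norm_neg, norm_smul, he1, mul_one, Real.norm_eq_abs,
          abs_of_pos (by linarith)]
        linarith
      have h0 := he2 _ hmem
      have hcomp : x - (d - ε) • e - z = (x - z) - (d - ε) • e := by abel
      rw [hcomp, inner_sub_right, real_inner_smul_right,
        real_inner_self_eq_norm_mul_norm, he1] at h0
      simp only [one_mul] at h0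
      linarith
  have : d ≤ ⟪e, x - z⟫ := by
    apply le_of_forall_pos_le_add
    intro ε hε
    have := hge ε hε
    linarith
  linarith

/-- The key pointwise-then-integrated bound for a fixed supporting hyperplane. -/
lemma key_bound (i : Fin n) {α : ℝ} (hα0 : 0 < α)
    {Ω : Set (EuclideanSpace ℝ (Fin n))} (hΩo : IsOpen Ω)
    {x z e : EuclideanSpace ℝ (Fin n)} (hx : x ∈ Ω)
    (he1 : ‖e‖ = 1) (he2 : ∀ y ∈ Ω, (0 : ℝ) ≤ ⟪e, y - z⟫)
    (hd0 : 0 < Metric.infDist x (frontier Ω))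
    (hdist : dist x z = Metric.infDist x (frontier Ω))
    (hball : ball x (Metric.infDist x (frontier Ω)) ⊆ Ω)
    (B : ℝ≥0∞) (hB : (⨆ y ∈ Ω, ENNReal.ofReal ⟪e, y - z⟫) ≤ B) :
    (∫⁻ w : sphere (0 : EuclideanSpace ℝ (Fin n)) 1,
        ENNReal.ofReal (|(w : EuclideanSpace ℝ (Fin n)) i| ^ α)
        ∂((volume : Measure (EuclideanSpace ℝ (Fin n))).toSphere)) *
      (1 / ENNReal.ofReal (Metric.infDist x (frontier Ω))
        + 1 / (B - ENNReal.ofReal (Metric.infDist x (frontier Ω)))) ^ α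
    ≤ ∫⁻ w : sphere (0 : EuclideanSpace ℝ (Fin n)) 1,
        (1 / dirDist Ω x (w : EuclideanSpace ℝ (Fin n))
          + 1 / dirDelta Ω x (w : EuclideanSpace ℝ (Fin n))) ^ α
        ∂((volume : Measure (EuclideanSpace ℝ (Fin n))).toSphere) := by
  set d := Metric.infDist x (frontier Ω) with hd
  have hxzd : ⟪e, x - z⟫ = d := inner_eq_infDist hx he1 he2 hd0 hdist hball
  have hstrict : ∀ y ∈ Ω, 0 < ⟪e, y - z⟫ := by
    intro y hy
    obtain ⟨ε, hε, hb⟩ := Metric.isOpen_iff.mp hΩo y hy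
    have hmem : y - (ε / 2) • e ∈ Ω := by
      apply hb
      rw [mem_ball, dist_eq_norm]
      have : y - (ε / 2) • e - y = -((ε / 2) • e) := by abel
      rw [this, norm_neg, norm_smul, he1, mul_one, Real.norm_eq_abs, abs_of_pos (by linarith)]
      linarith
    have h0 := he2 _ hmem
    have hcomp : y - (ε / 2) • e - z = (y - z) - (ε / 2) • e := by abel
    rw [hcomp, inner_sub_right, real_inner_smul_right,
      real_inner_self_eq_norm_mul_norm, he1] at h0
    simp only [one_mul] at h0
    linarith
  -- pointwise bound
  have hpt : ∀ w : sphere (0 : EuclideanSpace ℝ (Fin n)) 1,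
      ENNReal.ofReal (|⟪e, (w : EuclideanSpace ℝ (Fin n))⟫| ^ α) *
          (1 / ENNReal.ofReal d + 1 / (B - ENNReal.ofReal d)) ^ α
        ≤ (1 / dirDist Ω x (w : EuclideanSpace ℝ (Fin n))
            + 1 / dirDelta Ω x (w : EuclideanSpace ℝ (Fin n))) ^ α := by
    intro w
    set c := ⟪e, (w : EuclideanSpace ℝ (Fin n))⟫ with hc
    rcases eq_or_ne c 0 with hc0 | hc0
    · rw [hc0]
      simp [Real.zero_rpow hα0.ne']
    have hcpos : 0 < |c| := abs_pos.mpr hc0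
    have hbase : ENNReal.ofReal |c| * (1 / ENNReal.ofReal d + 1 / (B - ENNReal.ofReal d))
        ≤ 1 / dirDist Ω x (w : EuclideanSpace ℝ (Fin n))
          + 1 / dirDelta Ω x (w : EuclideanSpace ℝ (Fin n)) := by
      have hinner : ∀ t : ℝ, ⟪e, x + t • (w : EuclideanSpace ℝ (Fin n)) - z⟫ = d + t * c := by
        intro t
        have hcomp : x + t • (w : EuclideanSpace ℝ (Fin n)) - z
            = (x - z) + t • (w : EuclideanSpace ℝ (Fin n)) := by abel
        rw [hcomp, inner_add_right, real_inner_smul_right, hxzd]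
      have h1 : ENNReal.ofReal |c| * (1 / ENNReal.ofReal d)
          ≤ 1 / dirDist Ω x (w : EuclideanSpace ℝ (Fin n)) := by
        have hdd : dirDist Ω x (w : EuclideanSpace ℝ (Fin n)) ≤ ENNReal.ofReal (d / |c|) := by
          apply sInf_le
          refine ⟨-(d / c), ?_, ?_⟩
          · intro hmem
            have h2 := hstrict _ hmem
            rw [hinner] at h2
            rw [neg_mul, div_mul_cancel₀ d hc0] at h2
            simp at h2
          · rw [abs_neg, abs_div, abs_of_pos hd0]
        have : (ENNReal.ofReal (d / |c|))⁻¹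
            = ENNReal.ofReal |c| * (ENNReal.ofReal d)⁻¹ := by
          rw [← ENNReal.ofReal_inv_of_pos (div_pos hd0 hcpos), inv_div, div_eq_mul_inv,
            ENNReal.ofReal_mul (abs_nonneg c), ENNReal.ofReal_inv_of_pos hd0]
        rw [one_div, one_div, ← this]
        exact ENNReal.inv_le_inv.mpr hdd
      have h2 : ENNReal.ofReal |c| * (1 / (B - ENNReal.ofReal d))
          ≤ 1 / dirDelta Ω x (w : EuclideanSpace ℝ (Fin n)) := by
        rcases eq_or_ne B ⊤ with hBtop | hBtop
        · rw [hBtop]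
          rw [ENNReal.sub_eq_top_iff.mpr ⟨rfl, ENNReal.ofReal_ne_top⟩]
          simp
        · set Dr := B.toReal with hDr
          have hslab : ∀ y ∈ Ω, ⟪e, y - z⟫ ≤ Dr := by
            intro y hy
            have hle : ENNReal.ofReal ⟪e, y - z⟫ ≤ B :=
              le_trans (le_iSup₂ (f := fun y (_ : y ∈ Ω) => ENNReal.ofReal ⟪e, y - z⟫) y hy) hB
            have := ENNReal.toReal_mono hBtop hle
            rwa [ENNReal.toReal_ofReal (he2 y hy)] at this
          have hdDr : d ≤ Dr := by
            have := hslab x hx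
            rwa [hxzd] at this
          have h2d : 2 * d ≤ Dr := by
            apply le_of_forall_pos_le_add
            intro ε hε
            rcases le_or_gt d ε with hcase | hcase
            · linarith
            · have hmem : x + (d - ε) • e ∈ Ω := by
                apply hball
                rw [mem_ball, dist_eq_norm]
                have : x + (d - ε) • e - x = (d - ε) • e := by abel
                rw [this, norm_smul, he1, mul_one, Real.norm_eq_abs, abs_of_pos (by linarith)]
                linarith
              have h0 := hslab _ hmem
              have hcomp : x + (d - ε) • e - z = (x - z) + (d - ε) • e := by abel
              rw [hcomp, inner_add_right, real_inner_smul_right,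
                real_inner_self_eq_norm_mul_norm, he1, hxzd] at h0
              simp only [one_mul] at h0
              linarith
          have hDrd : 0 < Dr - d := by linarith
          have hdel : dirDelta Ω x (w : EuclideanSpace ℝ (Fin n))
              ≤ ENNReal.ofReal ((Dr - d) / |c|) := by
            apply sSup_le
            rintro r ⟨t, htΩ, rfl⟩
            have hl := hstrict _ htΩ
            have hu := hslab _ htΩ
            rw [hinner] at hl hu
            have habs : |t * c| ≤ Dr - d := by
              rw [abs_le]
              constructor <;> linarith
            have : |t| ≤ (Dr - d) / |c| := by
              rw [le_div_iff₀ hcpos]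
              calc |t| * |c| = |t * c| := (abs_mul t c).symm
                _ ≤ Dr - d := habs
            exact ENNReal.ofReal_le_ofReal this
          have heq : (ENNReal.ofReal ((Dr - d) / |c|))⁻¹
              = ENNReal.ofReal |c| * (ENNReal.ofReal (Dr - d))⁻¹ := by
            rw [← ENNReal.ofReal_inv_of_pos (div_pos hDrd hcpos), inv_div, div_eq_mul_inv,
              ENNReal.ofReal_mul (abs_nonneg c), ENNReal.ofReal_inv_of_pos hDrd]
          have hsub : ENNReal.ofReal (Dr - d) = B - ENNReal.ofReal d := by
            rw [ENNReal.ofReal_sub _ hd0.le, ENNReal.ofReal_toReal hBtop]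
          rw [one_div, one_div, ← hsub, ← heq]
          exact ENNReal.inv_le_inv.mpr hdel
      calc ENNReal.ofReal |c| * (1 / ENNReal.ofReal d + 1 / (B - ENNReal.ofReal d))
          = ENNReal.ofReal |c| * (1 / ENNReal.ofReal d)
            + ENNReal.ofReal |c| * (1 / (B - ENNReal.ofReal d)) := by ring
        _ ≤ _ := add_le_add h1 h2
    calc ENNReal.ofReal (|c| ^ α) * (1 / ENNReal.ofReal d + 1 / (B - ENNReal.ofReal d)) ^ α
        = (ENNReal.ofReal |c| * (1 / ENNReal.ofReal d + 1 / (B - ENNReal.ofReal d))) ^ α := by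
          rw [ENNReal.mul_rpow_of_nonneg _ _ hα0.le,
            ENNReal.ofReal_rpow_of_nonneg (abs_nonneg c) hα0.le]
      _ ≤ _ := ENNReal.rpow_le_rpow hbase hα0.le
  -- measurability
  have hmeasg : Measurable fun t : ℝ => ENNReal.ofReal (|t| ^ α) :=
    (ENNReal.continuous_ofReal.comp
      ((Real.continuous_rpow_const hα0.le).comp continuous_abs)).measurable
  have hmeas : Measurable fun w : sphere (0 : EuclideanSpace ℝ (Fin n)) 1 =>
      ENNReal.ofReal (|⟪e, (w : EuclideanSpace ℝ (Fin n))⟫| ^ α) :=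
    hmeasg.comp (Continuous.inner continuous_const continuous_subtype_val).measurable
  have hsingle : ‖(EuclideanSpace.single i (1:ℝ) : EuclideanSpace ℝ (Fin n))‖ = 1 := by
    rw [EuclideanSpace.norm_single]; norm_num
  have hrot : (∫⁻ w : sphere (0 : EuclideanSpace ℝ (Fin n)) 1,
        ENNReal.ofReal (|(w : EuclideanSpace ℝ (Fin n)) i| ^ α)
        ∂((volume : Measure (EuclideanSpace ℝ (Fin n))).toSphere))
      = ∫⁻ w : sphere (0 : EuclideanSpace ℝ (Fin n)) 1,
        ENNReal.ofReal (|⟪e, (w : EuclideanSpace ℝ (Fin n))⟫| ^ α)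
        ∂((volume : Measure (EuclideanSpace ℝ (Fin n))).toSphere) := by
    have hco : ∀ w : sphere (0 : EuclideanSpace ℝ (Fin n)) 1,
        (w : EuclideanSpace ℝ (Fin n)) i
          = ⟪(EuclideanSpace.single i (1:ℝ) : EuclideanSpace ℝ (Fin n)),
              (w : EuclideanSpace ℝ (Fin n))⟫ := by
      intro w
      rw [EuclideanSpace.inner_single_left]
      simp
    simp_rw [hco]
    exact lintegral_sphere_inner_eq (fun t => ENNReal.ofReal (|t| ^ α)) hmeasg hsingle he1
  rw [hrot]
  calc (∫⁻ w : sphere (0 : EuclideanSpace ℝ (Fin n)) 1,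
        ENNReal.ofReal (|⟪e, (w : EuclideanSpace ℝ (Fin n))⟫| ^ α)
        ∂((volume : Measure (EuclideanSpace ℝ (Fin n))).toSphere)) *
      (1 / ENNReal.ofReal d + 1 / (B - ENNReal.ofReal d)) ^ α
      = ∫⁻ w : sphere (0 : EuclideanSpace ℝ (Fin n)) 1,
        ENNReal.ofReal (|⟪e, (w : EuclideanSpace ℝ (Fin n))⟫| ^ α) *
          (1 / ENNReal.ofReal d + 1 / (B - ENNReal.ofReal d)) ^ α
        ∂((volume : Measure (EuclideanSpace ℝ (Fin n))).toSphere) :=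
      (lintegral_mul_const _ hmeas).symm
    _ ≤ _ := lintegral_mono hpt

end Aux

/-- The pointwise lower bound
`∫_{S^{n-1}} (1/d_{w,Ω}(x) + 1/δ_{w,Ω}(x))^α dw ≥
  (∫_{S^{n-1}} |w_n|^α dw) · (1/d_Ω(x) + 1/(D_Ω(x) − d_Ω(x)))^α`
for an open convex set `Ω` (the term `1/(D_Ω(x)-d_Ω(x))` is `0` when `D_Ω(x) = ∞`). -/
theorem stmt11 (n : ℕ) (hn : 1 ≤ n) (α : ℝ) (hα1 : 1 < α) (hα2 : α < 2)
    (Ω : Set (EuclideanSpace ℝ (Fin n))) (hΩo : IsOpen Ω) (hconv : Convex ℝ Ω)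
    (hb : (frontier Ω).Nonempty) (x : EuclideanSpace ℝ (Fin n)) (hx : x ∈ Ω) :
    (∫⁻ w : sphere (0 : EuclideanSpace ℝ (Fin n)) 1,
        ENNReal.ofReal (|(w : EuclideanSpace ℝ (Fin n)) ⟨n - 1, by omega⟩| ^ α)
        ∂((volume : Measure (EuclideanSpace ℝ (Fin n))).toSphere)) *
      (1 / ENNReal.ofReal (Metric.infDist x (frontier Ω))
        + 1 / (slabWidth Ω x - ENNReal.ofReal (Metric.infDist x (frontier Ω)))) ^ α
    ≤ ∫⁻ w : sphere (0 : EuclideanSpace ℝ (Fin n)) 1,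
        (1 / dirDist Ω x (w : EuclideanSpace ℝ (Fin n))
          + 1 / dirDelta Ω x (w : EuclideanSpace ℝ (Fin n))) ^ α
        ∂((volume : Measure (EuclideanSpace ℝ (Fin n))).toSphere) := by
  have hα0 : 0 < α := by linarith
  set i : Fin n := ⟨n - 1, by omega⟩
  set d := Metric.infDist x (frontier Ω) with hdd
  -- nearest point on the frontier
  obtain ⟨z₀, hz₀f, hz₀d⟩ := isClosed_frontier.exists_infDist_eq_dist hb x
  have hnotΩ : ∀ p ∈ frontier Ω, p ∉ Ω := by
    intro p hp hpΩ
    have := hΩo.inter_frontier_eq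
    exact Set.eq_empty_iff_forall_notMem.mp this p ⟨hpΩ, hp⟩
  have hd0 : 0 < d := by
    rw [hdd, hz₀d]
    rw [dist_pos]
    intro heq
    exact hnotΩ z₀ hz₀f (heq ▸ hx)
  have hball : ball x d ⊆ Ω := by
    intro y hy
    by_contra hyΩ
    obtain ⟨p, hpf, hpd⟩ := cross_frontier hΩo hx hyΩ
    have h1 : d ≤ dist x p := Metric.infDist_le_dist_of_mem hpf
    have h2 : dist x y < d := by rw [dist_comm]; exact mem_ball.mp hy
    linarith
  -- supporting hyperplane at any frontier point
  have hsupp : ∀ z ∈ frontier Ω, ∃ e : EuclideanSpace ℝ (Fin n),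
      ‖e‖ = 1 ∧ ∀ y ∈ Ω, (0 : ℝ) ≤ ⟪e, y - z⟫ := by
    intro z hz
    obtain ⟨f, hf⟩ := geometric_hahn_banach_open_point hconv hΩo (hnotΩ z hz)
    set v := (InnerProductSpace.toDual ℝ (EuclideanSpace ℝ (Fin n))).symm f with hv
    have hvf : ∀ u, ⟪v, u⟫ = f u := fun u => InnerProductSpace.toDual_symm_apply
    have hvne : v ≠ 0 := by
      intro h0
      have h1 := hf x hx
      have h2 : f x = 0 := by rw [← hvf x, h0, inner_zero_left]
      have h3 : f z = 0 := by rw [← hvf z, h0, inner_zero_left]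
      rw [h2, h3] at h1
      exact lt_irrefl 0 h1
    have hvnorm : ‖v‖ ≠ 0 := norm_ne_zero_iff.mpr hvne
    refine ⟨-(‖v‖⁻¹ • v), ?_, ?_⟩
    · rw [norm_neg, norm_smul, Real.norm_eq_abs, abs_of_nonneg (by positivity),
        inv_mul_cancel₀ hvnorm]
    · intro y hy
      have h1 : f y < f z := hf y hy
      have h2 : ⟪-(‖v‖⁻¹ • v), y - z⟫ = -(‖v‖⁻¹ * (f y - f z)) := by
        rw [inner_neg_left, real_inner_smul_left, inner_sub_right, hvf, hvf]
      rw [h2]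
      have : 0 < ‖v‖⁻¹ := by positivity
      nlinarith
  obtain ⟨e₀, he₀1, he₀2⟩ := hsupp z₀ hz₀f
  have hz₀dist : dist x z₀ = d := hz₀d.symm
  -- each admissible inner product equals d at x
  have hinner_d : ∀ z e : EuclideanSpace ℝ (Fin n),
      z ∈ frontier Ω → dist x z = d → ‖e‖ = 1 → (∀ y ∈ Ω, (0 : ℝ) ≤ ⟪e, y - z⟫) →
        ⟪e, x - z⟫ = d := fun z e _ h2 h3 h4 => inner_eq_infDist hx h3 h4 hd0 h2 hball
  rcases eq_or_ne (slabWidth Ω x) ⊤ with hDtop | hDtop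
  · rw [hDtop, ENNReal.sub_eq_top_iff.mpr ⟨rfl, ENNReal.ofReal_ne_top⟩]
    have := key_bound i hα0 hΩo hx he₀1 he₀2 hd0 hz₀dist hball ⊤ le_top
    rwa [ENNReal.sub_eq_top_iff.mpr ⟨rfl, ENNReal.ofReal_ne_top⟩] at this
  · -- finiteness of the constant
    have hIαne : (∫⁻ w : sphere (0 : EuclideanSpace ℝ (Fin n)) 1,
        ENNReal.ofReal (|(w : EuclideanSpace ℝ (Fin n)) i| ^ α)
        ∂((volume : Measure (EuclideanSpace ℝ (Fin n))).toSphere)) ≠ ⊤ := by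
      have hbdd : ∀ w : sphere (0 : EuclideanSpace ℝ (Fin n)) 1,
          ENNReal.ofReal (|(w : EuclideanSpace ℝ (Fin n)) i| ^ α) ≤ 1 := by
        intro w
        have h1 : |(w : EuclideanSpace ℝ (Fin n)) i| ≤ 1 := by
          have h2 := abs_real_inner_le_norm
            (EuclideanSpace.single i (1:ℝ) : EuclideanSpace ℝ (Fin n))
            (w : EuclideanSpace ℝ (Fin n))
          rw [EuclideanSpace.norm_single] at h2
          have h3 := mem_sphere_zero_iff_norm.mp w.2
          rw [h3] at h2
          have h4 : ⟪(EuclideanSpace.single i (1:ℝ) : EuclideanSpace ℝ (Fin n)),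
              (w : EuclideanSpace ℝ (Fin n))⟫ = (w : EuclideanSpace ℝ (Fin n)) i := by
            rw [EuclideanSpace.inner_single_left]; simp
          rw [h4] at h2
          simpa using h2
        have := Real.rpow_le_one (abs_nonneg _) h1 hα0.le
        calc ENNReal.ofReal (|(w : EuclideanSpace ℝ (Fin n)) i| ^ α)
            ≤ ENNReal.ofReal 1 := ENNReal.ofReal_le_ofReal this
          _ = 1 := ENNReal.ofReal_one
      have h5 : (∫⁻ w : sphere (0 : EuclideanSpace ℝ (Fin n)) 1,
          ENNReal.ofReal (|(w : EuclideanSpace ℝ (Fin n)) i| ^ α)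
          ∂((volume : Measure (EuclideanSpace ℝ (Fin n))).toSphere))
          ≤ (volume : Measure (EuclideanSpace ℝ (Fin n))).toSphere Set.univ := by
        calc (∫⁻ w : sphere (0 : EuclideanSpace ℝ (Fin n)) 1,
            ENNReal.ofReal (|(w : EuclideanSpace ℝ (Fin n)) i| ^ α)
            ∂((volume : Measure (EuclideanSpace ℝ (Fin n))).toSphere))
            ≤ ∫⁻ _ : sphere (0 : EuclideanSpace ℝ (Fin n)) 1, 1
              ∂((volume : Measure (EuclideanSpace ℝ (Fin n))).toSphere) :=
              lintegral_mono hbdd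
          _ = (volume : Measure (EuclideanSpace ℝ (Fin n))).toSphere Set.univ := lintegral_one
      exact (h5.trans_lt (measure_lt_top _ _)).ne
    -- d ≤ slabWidth
    have hdD : ENNReal.ofReal d ≤ slabWidth Ω x := by
      rw [slabWidth]
      refine le_iInf₂ fun z hz => le_iInf₂ fun e he => ?_
      have hze := hinner_d z e hz.1 hz.2 he.1 he.2
      calc ENNReal.ofReal d = ENNReal.ofReal ⟪e, x - z⟫ := by rw [hze]
        _ ≤ ⨆ y ∈ Ω, ENNReal.ofReal ⟪e, y - z⟫ :=
          le_iSup₂ (f := fun y (_ : y ∈ Ω) => ENNReal.ofReal ⟪e, y - z⟫) x hx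
    set K := slabWidth Ω x - ENNReal.ofReal d with hK
    -- the approximation sequence
    have hF : ∀ k : ℕ,
        (∫⁻ w : sphere (0 : EuclideanSpace ℝ (Fin n)) 1,
          ENNReal.ofReal (|(w : EuclideanSpace ℝ (Fin n)) i| ^ α)
          ∂((volume : Measure (EuclideanSpace ℝ (Fin n))).toSphere)) *
          (1 / ENNReal.ofReal d + 1 / (K + ENNReal.ofReal (1 / (k + 1)))) ^ α
        ≤ ∫⁻ w : sphere (0 : EuclideanSpace ℝ (Fin n)) 1,
          (1 / dirDist Ω x (w : EuclideanSpace ℝ (Fin n))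
            + 1 / dirDelta Ω x (w : EuclideanSpace ℝ (Fin n))) ^ α
          ∂((volume : Measure (EuclideanSpace ℝ (Fin n))).toSphere) := by
      intro k
      have hεpos : (0 : ℝ) < 1 / (k + 1) := by positivity
      have hεne : ENNReal.ofReal (1 / (k + 1)) ≠ 0 :=
        (ENNReal.ofReal_pos.mpr hεpos).ne'
      have hlt : slabWidth Ω x < slabWidth Ω x + ENNReal.ofReal (1 / (k + 1)) :=
        ENNReal.lt_add_right hDtop hεne
      conv_lhs at hlt => rw [slabWidth]
      obtain ⟨z, hz⟩ := iInf_lt_iff.mp hlt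
      obtain ⟨hzmem, hz⟩ := iInf_lt_iff.mp hz
      obtain ⟨e, he⟩ := iInf_lt_iff.mp hz
      obtain ⟨hemem, he⟩ := iInf_lt_iff.mp he
      have hkey := key_bound i hα0 hΩo hx hemem.1 hemem.2 hd0 hzmem.2 hball
        (slabWidth Ω x + ENNReal.ofReal (1 / (k + 1))) he.le
      have hsum : K + ENNReal.ofReal (1 / (k + 1)) + ENNReal.ofReal d
          = slabWidth Ω x + ENNReal.ofReal (1 / (k + 1)) := by
        rw [hK, add_right_comm, tsub_add_cancel_of_le hdD]
      have hsub : slabWidth Ω x + ENNReal.ofReal (1 / (k + 1)) - ENNReal.ofReal d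
          = K + ENNReal.ofReal (1 / (k + 1)) :=
        ENNReal.sub_eq_of_eq_add ENNReal.ofReal_ne_top hsum.symm
      rwa [hsub] at hkey
    -- pass to the limit
    have htendsto : Filter.Tendsto (fun k : ℕ =>
        (∫⁻ w : sphere (0 : EuclideanSpace ℝ (Fin n)) 1,
          ENNReal.ofReal (|(w : EuclideanSpace ℝ (Fin n)) i| ^ α)
          ∂((volume : Measure (EuclideanSpace ℝ (Fin n))).toSphere)) *
          (1 / ENNReal.ofReal d + 1 / (K + ENNReal.ofReal (1 / (k + 1)))) ^ α)
        Filter.atTop (nhds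
        ((∫⁻ w : sphere (0 : EuclideanSpace ℝ (Fin n)) 1,
          ENNReal.ofReal (|(w : EuclideanSpace ℝ (Fin n)) i| ^ α)
          ∂((volume : Measure (EuclideanSpace ℝ (Fin n))).toSphere)) *
          (1 / ENNReal.ofReal d + 1 / K) ^ α)) := by
      have t1 : Filter.Tendsto (fun k : ℕ => K + ENNReal.ofReal (1 / (k + 1)))
          Filter.atTop (nhds K) := by
        have := (ENNReal.tendsto_ofReal
          (tendsto_one_div_add_atTop_nhds_zero_nat)).const_add K
        simpa using this
      have t2 := t1.inv
      have t3 := t2.const_add (1 / ENNReal.ofReal d)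
      have t4 := ((ENNReal.continuous_rpow_const (y := α)).tendsto _).comp t3
      have t5 := ENNReal.Tendsto.const_mul t4 (Or.inr hIαne)
      simp only [Function.comp_def, one_div] at t5 ⊢
      exact t5
    have := le_of_tendsto htendsto (Filter.Eventually.of_forall hF)
    rwa [hK] at this
end

section
/- For 0 < α < 2 with α ≠ 1, the constant κ_{1,α} = (1/α)[2^(1−α) Γ((2−α)/2) Γ((1+α)/2)/√π − 1] is strictly positive, and κ_{1,1} = 0. -/
open Real

/-- For `t ∈ (-1,1)`, `t ≠ 0`, we have `Γ(1 - t/2) Γ(1 + t/2) = (πt/2)/sin(πt/2) > 1`. -/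
lemma aux_refl_gt_one {t : ℝ} (ht1 : -1 < t) (ht2 : t < 1) (ht : t ≠ 0) :
    1 < Real.Gamma (1 - t / 2) * Real.Gamma (1 + t / 2) := by
  have h2 : t / 2 ≠ 0 := div_ne_zero ht two_ne_zero
  have hadd : Real.Gamma (1 + t / 2) = (t / 2) * Real.Gamma (t / 2) := by
    rw [add_comm, Real.Gamma_add_one h2]
  have hrefl : Real.Gamma (t / 2) * Real.Gamma (1 - t / 2) = π / Real.sin (π * (t / 2)) :=
    Real.Gamma_mul_Gamma_one_sub (t / 2)
  have key : Real.Gamma (1 - t / 2) * Real.Gamma (1 + t / 2)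
      = (π * (t / 2)) / Real.sin (π * (t / 2)) := by
    calc Real.Gamma (1 - t / 2) * Real.Gamma (1 + t / 2)
        = (t / 2) * (Real.Gamma (t / 2) * Real.Gamma (1 - t / 2)) := by rw [hadd]; ring
      _ = (t / 2) * (π / Real.sin (π * (t / 2))) := by rw [hrefl]
      _ = (π * (t / 2)) / Real.sin (π * (t / 2)) := by ring
  rw [key]
  rcases lt_or_gt_of_ne ht with hneg | hpos
  · -- t < 0 : set y = -π t /2 > 0
    have hy0 : 0 < π * (-t / 2) := mul_pos pi_pos (by linarith)
    have hyπ : π * (-t / 2) < π := by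
      have : -t / 2 < 1 := by linarith
      nlinarith [pi_pos]
    have hsinpos : 0 < Real.sin (π * (-t / 2)) := sin_pos_of_pos_of_lt_pi hy0 hyπ
    have hsinlt : Real.sin (π * (-t / 2)) < π * (-t / 2) := Real.sin_lt hy0
    have hodd : Real.sin (π * (t / 2)) = -Real.sin (π * (-t / 2)) := by
      rw [← Real.sin_neg]; ring_nf
    have hnum : π * (t / 2) = -(π * (-t / 2)) := by ring
    rw [hodd, hnum, neg_div_neg_eq, one_lt_div hsinpos]
    exact hsinlt
  · have hy0 : 0 < π * (t / 2) := by positivity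
    have hyπ : π * (t / 2) < π := by nlinarith [pi_pos]
    have hsinpos : 0 < Real.sin (π * (t / 2)) := sin_pos_of_pos_of_lt_pi hy0 hyπ
    have hsinlt : Real.sin (π * (t / 2)) < π * (t / 2) := Real.sin_lt hy0
    rw [one_lt_div hsinpos]
    exact hsinlt

/-- Log-convexity midpoint bound: `Γ((3-α)/2)² ≤ Γ(2-α)` for `0 < α < 2`. -/
lemma aux_logconvex {α : ℝ} (h0 : 0 < α) (h2 : α < 2) :
    Real.Gamma ((3 - α) / 2) ^ 2 ≤ Real.Gamma (2 - α) := by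
  have h1 : (1 : ℝ) ∈ Set.Ioi (0 : ℝ) := by norm_num
  have hx : (2 - α) ∈ Set.Ioi (0 : ℝ) := by simp; linarith
  have hconv := Real.convexOn_log_Gamma.2 h1 hx (by norm_num : (0:ℝ) ≤ 1/2)
    (by norm_num : (0:ℝ) ≤ 1/2) (by norm_num)
  have hmid : (1 / 2 : ℝ) • (1 : ℝ) + (1 / 2 : ℝ) • (2 - α) = (3 - α) / 2 := by
    simp [smul_eq_mul]; ring
  rw [hmid] at hconv
  simp only [Function.comp_apply, smul_eq_mul, Real.Gamma_one, Real.log_one, mul_zero,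
    zero_add] at hconv
  have hc : 0 < Real.Gamma ((3 - α) / 2) := Real.Gamma_pos_of_pos (by linarith)
  have hg : 0 < Real.Gamma (2 - α) := Real.Gamma_pos_of_pos (by linarith)
  have : Real.log (Real.Gamma ((3 - α) / 2) ^ 2) ≤ Real.log (Real.Gamma (2 - α)) := by
    rw [Real.log_pow]; push_cast; linarith
  exact (Real.log_le_log_iff (by positivity) hg).mp this

/-- The key strict inequality. -/
lemma aux_key {α : ℝ} (h0 : 0 < α) (h2 : α < 2) (h1 : α ≠ 1) :
    Real.Gamma ((3 - α) / 2) < Real.Gamma (2 - α) * Real.Gamma ((1 + α) / 2) := by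
  set t := 1 - α with htdef
  have ht1 : -1 < t := by simp [htdef]; linarith
  have ht2 : t < 1 := by simp [htdef]; linarith
  have ht : t ≠ 0 := by simp [htdef]; intro h; exact h1 (by linarith)
  have hb : (1 + α) / 2 = 1 - t / 2 := by simp [htdef]; ring
  have hcc : (3 - α) / 2 = 1 + t / 2 := by simp [htdef]; ring
  have hB := aux_refl_gt_one ht1 ht2 ht
  have hA := aux_logconvex h0 h2
  have hc : 0 < Real.Gamma ((3 - α) / 2) := Real.Gamma_pos_of_pos (by linarith)
  have hbpos : 0 < Real.Gamma ((1 + α) / 2) := Real.Gamma_pos_of_pos (by linarith)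
  rw [← hb, ← hcc] at hB
  calc Real.Gamma ((3 - α) / 2)
      = Real.Gamma ((3 - α) / 2) * 1 := (mul_one _).symm
    _ < Real.Gamma ((3 - α) / 2) * (Real.Gamma ((1 + α) / 2) * Real.Gamma ((3 - α) / 2)) := by
        exact (mul_lt_mul_iff_right₀ hc).mpr hB
    _ = Real.Gamma ((3 - α) / 2) ^ 2 * Real.Gamma ((1 + α) / 2) := by ring
    _ ≤ Real.Gamma (2 - α) * Real.Gamma ((1 + α) / 2) := by
        exact mul_le_mul_of_nonneg_right hA hbpos.le

/-- The constant `κ_{1,α} = (1/α)[2^(1-α) Γ((2-α)/2) Γ((1+α)/2)/√π − 1]` is strictly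
positive for `α ∈ (0,2) ∖ {1}`, and vanishes at `α = 1`. -/
theorem stmt19 :
    (∀ α : ℝ, 0 < α → α < 2 → α ≠ 1 →
      0 < (1 / α) * ((2 : ℝ) ^ (1 - α) * Real.Gamma ((2 - α) / 2)
        * Real.Gamma ((1 + α) / 2) / Real.sqrt Real.pi - 1)) ∧
    (1 / (1 : ℝ)) * ((2 : ℝ) ^ (1 - (1 : ℝ)) * Real.Gamma ((2 - (1 : ℝ)) / 2)
        * Real.Gamma ((1 + (1 : ℝ)) / 2) / Real.sqrt Real.pi - 1) = 0 := by
  constructor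
  · intro α h0 h2 h1
    have hsqrtπ : 0 < Real.sqrt π := Real.sqrt_pos.mpr pi_pos
    have hc : 0 < Real.Gamma ((3 - α) / 2) := Real.Gamma_pos_of_pos (by linarith)
    -- duplication formula with s = (2-α)/2
    have hdup := Real.Gamma_mul_Gamma_add_half ((2 - α) / 2)
    have he1 : (2 - α) / 2 + 1 / 2 = (3 - α) / 2 := by ring
    have he2 : 2 * ((2 - α) / 2) = 2 - α := by ring
    rw [he1, he2] at hdup
    -- ratio equals Γ(2-α)Γ((1+α)/2)/Γ((3-α)/2)
    have hpow : (2 : ℝ) ^ (1 - α) * (2 : ℝ) ^ (1 - (2 - α)) = 1 := by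
      rw [← Real.rpow_add (by norm_num : (0:ℝ) < 2),
        show (1 - α) + (1 - (2 - α)) = (0:ℝ) by ring, Real.rpow_zero]
    have hmain : (2 : ℝ) ^ (1 - α) * Real.Gamma ((2 - α) / 2) * Real.Gamma ((1 + α) / 2)
        * Real.Gamma ((3 - α) / 2)
        = Real.Gamma (2 - α) * Real.Gamma ((1 + α) / 2) * Real.sqrt π := by
      calc (2 : ℝ) ^ (1 - α) * Real.Gamma ((2 - α) / 2) * Real.Gamma ((1 + α) / 2)
          * Real.Gamma ((3 - α) / 2)
          = (2 : ℝ) ^ (1 - α) * (Real.Gamma ((2 - α) / 2) * Real.Gamma ((3 - α) / 2))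
            * Real.Gamma ((1 + α) / 2) := by ring
        _ = (2 : ℝ) ^ (1 - α) * (Real.Gamma (2 - α) * (2 : ℝ) ^ (1 - (2 - α)) * Real.sqrt π)
            * Real.Gamma ((1 + α) / 2) := by rw [hdup]
        _ = ((2 : ℝ) ^ (1 - α) * (2 : ℝ) ^ (1 - (2 - α))) * Real.Gamma (2 - α) * Real.sqrt π
            * Real.Gamma ((1 + α) / 2) := by ring
        _ = Real.Gamma (2 - α) * Real.Gamma ((1 + α) / 2) * Real.sqrt π := by rw [hpow]; ring
    have hratio : (2 : ℝ) ^ (1 - α) * Real.Gamma ((2 - α) / 2)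
        * Real.Gamma ((1 + α) / 2) / Real.sqrt π
        = Real.Gamma (2 - α) * Real.Gamma ((1 + α) / 2) / Real.Gamma ((3 - α) / 2) := by
      rw [div_eq_div_iff (ne_of_gt hsqrtπ) (ne_of_gt hc)]
      linear_combination hmain
    rw [hratio]
    have hkey := aux_key h0 h2 h1
    have : 1 < Real.Gamma (2 - α) * Real.Gamma ((1 + α) / 2) / Real.Gamma ((3 - α) / 2) :=
      (one_lt_div hc).mpr hkey
    have hα : 0 < 1 / α := by positivity
    nlinarith
  · have h12 : ((2 : ℝ) - 1) / 2 = 1 / 2 := by norm_num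
    have h11 : ((1 : ℝ) + 1) / 2 = 1 := by norm_num
    rw [h12, h11, Real.Gamma_one, Real.Gamma_one_half_eq]
    have : (1 : ℝ) - 1 = 0 := by norm_num
    rw [this, Real.rpow_zero]
    have hsqrtπ : Real.sqrt π ≠ 0 := ne_of_gt (Real.sqrt_pos.mpr pi_pos)
    field_simp
    norm_num
end
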